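/- Let q be a power of a prime p and m > 1 an integer with gcd(m, q) = 1 and m dividing q + 1, and let ζ ∈ F_{q^2} be a primitive m-th root of unity. Let S = {(x, y) ∈ F_{q^2} × F_{q^2} : y^q − y = x^m} and let Ω = {(0, y) : y ∈ F_q} ⊆ S. Then the map η(x, y) = (ζ x, y + 1) is a bijection of S onto itself of order pm; every point of Ω has η-orbit of cardinality exactly p, so Ω splits into q/p such orbits; and every point of S with x ≠ 0 has η-orbit of cardinality exactly pm. -/

import Mathlib

/-- The orbit of a point `P` under a bijection `f`, i.e. `{f^k(P) : k ∈ ℤ}`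
(for an injective `f`, `Q` lies in the orbit of `P` iff some forward iterates agree). -/
def fnOrbit {α : Type*} (f : α → α) (P : α) : Set α :=
  {Q | ∃ j k : ℕ, f^[j] P = f^[k] Q}

/-- `f` has order exactly `n`: `f^[n] = id` and `n` is minimal positive such. -/
def IsOrderOf {α : Type*} (f : α → α) (n : ℕ) : Prop :=
  f^[n] = id ∧ ∀ k : ℕ, 0 < k → f^[k] = id → n ≤ k

lemma fnOrbit_self {α : Type*} (f : α → α) (P : α) : P ∈ fnOrbit f P := ⟨0, 0, rfl⟩

lemma fnOrbit_mem_symm {α : Type*} {f : α → α} {P Q : α} (h : Q ∈ fnOrbit f P) :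
    P ∈ fnOrbit f Q := by
  obtain ⟨j, k, hjk⟩ := h; exact ⟨k, j, hjk.symm⟩

lemma fnOrbit_mem_trans {α : Type*} {f : α → α} {P Q R : α} (h1 : Q ∈ fnOrbit f P)
    (h2 : R ∈ fnOrbit f Q) : R ∈ fnOrbit f P := by
  obtain ⟨j, k, hjk⟩ := h1
  obtain ⟨a, b, hab⟩ := h2
  refine ⟨a + j, k + b, ?_⟩
  calc f^[a+j] P = f^[a] (f^[j] P) := Function.iterate_add_apply ..
    _ = f^[a] (f^[k] Q) := by rw [hjk]
    _ = f^[a + k] Q := (Function.iterate_add_apply ..).symm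
    _ = f^[k + a] Q := by rw [Nat.add_comm]
    _ = f^[k] (f^[a] Q) := Function.iterate_add_apply ..
    _ = f^[k] (f^[b] R) := by rw [hab]
    _ = f^[k + b] R := (Function.iterate_add_apply ..).symm

lemma fnOrbit_eq_of_mem {α : Type*} {f : α → α} {P Q : α} (h : Q ∈ fnOrbit f P) :
    fnOrbit f Q = fnOrbit f P :=
  Set.ext fun _ => ⟨fun hR => fnOrbit_mem_trans h hR,
    fun hR => fnOrbit_mem_trans (fnOrbit_mem_symm h) hR⟩

lemma fnOrbit_eq_range {α : Type*} {f : α → α} {N : ℕ} (hN1 : 1 ≤ N) (hN : f^[N] = id)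
    (P : α) : fnOrbit f P = Set.range fun t => f^[t] P := by
  ext Q
  constructor
  · rintro ⟨j, k, hjk⟩
    refine ⟨k * (N - 1) + j, ?_⟩
    have h2 : k * (N - 1) + k = k * N := by
      conv_rhs => rw [← Nat.sub_add_cancel hN1]
      rw [Nat.mul_add, Nat.mul_one]
    calc f^[k * (N-1) + j] P = f^[k * (N-1)] (f^[j] P) := Function.iterate_add_apply ..
      _ = f^[k * (N-1)] (f^[k] Q) := by rw [hjk]
      _ = f^[k * (N-1) + k] Q := (Function.iterate_add_apply ..).symm
      _ = f^[k * N] Q := by rw [h2]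
      _ = (f^[N])^[k] Q := by rw [Nat.mul_comm, Function.iterate_mul]
      _ = Q := by rw [hN, Function.iterate_id]; rfl
  · rintro ⟨t, rfl⟩; exact ⟨t, 0, rfl⟩

lemma range_iterate_ncard {α : Type*} {f : α → α} {P : α} {d : ℕ} (hd : 0 < d)
    (hinj : Function.Injective f) (hfix : ∀ k : ℕ, f^[k] P = P ↔ d ∣ k) :
    (Set.range fun t => f^[t] P).ncard = d := by
  have hrange : (Set.range fun t => f^[t] P) = (fun t => f^[t] P) '' ↑(Finset.range d) := by
    ext Q
    constructor
    · rintro ⟨t, rfl⟩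
      refine ⟨t % d, by simp [Nat.mod_lt _ hd], ?_⟩
      have h1 : f^[d * (t / d)] P = P := (hfix _).mpr ⟨_, rfl⟩
      show f^[t % d] P = f^[t] P
      conv_rhs => rw [← Nat.mod_add_div t d]
      rw [Function.iterate_add_apply, h1]
    · rintro ⟨t, _, rfl⟩; exact ⟨t, rfl⟩
  have hInj : Set.InjOn (fun t => f^[t] P) ↑(Finset.range d) := by
    have key : ∀ a b : ℕ, a ≤ b → b < d → f^[a] P = f^[b] P → a = b := by
      intro a b hab hbd hfab
      have h1 : f^[a] (f^[b-a] P) = f^[a] P := by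
        rw [← Function.iterate_add_apply, Nat.add_sub_cancel' hab, hfab]
      have h2 : f^[b-a] P = P := (hinj.iterate a) h1
      have := (hfix _).mp h2
      have : b - a = 0 := by
        rcases Nat.eq_zero_of_dvd_of_lt this (by omega) with h
        · exact h
      omega
    intro a ha b hb hab
    simp only [Finset.coe_range, Set.mem_Iio] at ha hb
    rcases le_total a b with h | h
    · exact key a b h hb hab
    · exact (key b a h ha hab.symm).symm
  rw [hrange, Set.ncard_image_of_injOn hInj, Set.ncard_coe_finset, Finset.card_range]

theorem stmt19 (p nn q m : ℕ) (hp : p.Prime) (hq : q = p ^ nn) (hn : 1 ≤ nn)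
    (hm : 1 < m) (hgcd : Nat.gcd m q = 1) (hdvd : m ∣ (q + 1))
    {F : Type*} [Field F] [Fintype F] (hF : Fintype.card F = q ^ 2)
    (ζ : F) (hζ : orderOf ζ = m)
    (S : Set (F × F)) (hS : S = {P : F × F | P.2 ^ q - P.2 = P.1 ^ m})
    (Ω : Set (F × F)) (hΩ : Ω = {P : F × F | P.1 = 0 ∧ P.2 ^ q = P.2})
    (η : F × F → F × F) (hη : η = fun P => (ζ * P.1, P.2 + 1)) :
    Ω ⊆ S ∧
    Set.BijOn η S S ∧
    IsOrderOf η (p * m) ∧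
    (∀ P ∈ Ω, (fnOrbit η P).ncard = p) ∧
    {O : Set (F × F) | ∃ P ∈ Ω, O = fnOrbit η P}.ncard = q / p ∧
    ∀ P ∈ S, P.1 ≠ 0 → (fnOrbit η P).ncard = p * m := by
  classical
  have hp2 := hp.two_le
  have hq1 : 1 ≤ q := by rw [hq]; exact Nat.one_le_pow _ _ hp.pos
  have hq2 : 2 ≤ q := by
    rw [hq]
    calc 2 ≤ p := hp2
      _ = p ^ 1 := (pow_one p).symm
      _ ≤ p ^ nn := Nat.pow_le_pow_right hp.pos hn
  have hm0 : 0 < m := by omega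
  have hN0 : 0 < p * m := Nat.mul_pos hp.pos hm0
  have hN1 : 1 ≤ p * m := hN0
  -- characteristic
  have hchar : CharP F p := by
    obtain ⟨r, hr⟩ := CharP.exists F
    haveI := hr
    obtain ⟨k, hrp, hcard⟩ := FiniteField.card F r
    have hpr : r = p := by
      have h1 : p ∣ r ^ (k : ℕ) := by
        rw [← hcard, hF, hq, ← pow_mul]
        exact dvd_pow (dvd_refl p) (by positivity)
      have h2 : p ∣ r := hp.dvd_of_dvd_pow h1
      exact ((Nat.prime_dvd_prime_iff_eq hp hrp).mp h2).symm
    rw [← hpr]; exact hr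
  haveI := hchar
  haveI : Fact p.Prime := ⟨hp⟩
  have hcast0 : ∀ k : ℕ, ((k : F) = 0 ↔ p ∣ k) := fun k => CharP.cast_eq_zero_iff F p k
  have hfrob : ∀ x y : F, (x + y) ^ q = x ^ q + y ^ q := by
    intro x y; rw [hq]; exact add_pow_char_pow x y p nn
  have hnatfix : ∀ k : ℕ, ((k : F)) ^ q = (k : F) := by
    intro k
    have h := map_natCast (iterateFrobenius F p nn) k
    rwa [iterateFrobenius_def, ← hq] at h
  have hζ1 : ζ ^ m = 1 := by rw [← hζ]; exact pow_orderOf_eq_one ζ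
  have hζ0 : ζ ≠ 0 := by
    intro h
    rw [h, zero_pow hm0.ne'] at hζ1
    exact zero_ne_one hζ1
  have hpm : Nat.Coprime p m := by
    have h1 : Nat.Coprime m q := hgcd
    rw [hq] at h1
    exact ((Nat.coprime_pow_right_iff (by omega : 0 < nn) m p).mp h1).symm
  have hiter : ∀ (k : ℕ) (P : F × F), η^[k] P = (ζ ^ k * P.1, P.2 + (k : F)) := by
    intro k
    induction k with
    | zero => intro P; simp
    | succ n ih =>
      intro P
      rw [Function.iterate_succ_apply', ih, hη]
      refine Prod.ext ?_ ?_
      · show ζ * (ζ ^ n * P.1) = ζ ^ (n+1) * P.1; ring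
      · show P.2 + (n : F) + 1 = P.2 + ((n + 1 : ℕ) : F); push_cast; ring
  have hNid : η^[p * m] = id := by
    funext P
    rw [hiter]
    have h1 : ζ ^ (p * m) = 1 := by rw [mul_comm, pow_mul, hζ1, one_pow]
    have h2 : ((p * m : ℕ) : F) = 0 := (hcast0 _).mpr ⟨m, rfl⟩
    simp [h1, h2]
  have hinj : Function.Injective η := by
    have h1 : Function.Injective (η^[p * m]) := by rw [hNid]; exact fun a b h => h
    have h2 : p * m = (p * m - 1) + 1 := by omega
    rw [h2, Function.iterate_succ] at h1
    exact h1.of_comp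
  have hfixiff : ∀ k : ℕ, (η^[k] = id ↔ p * m ∣ k) := by
    intro k
    constructor
    · intro h
      have h1 := congrFun h ((1 : F), (0 : F))
      rw [hiter] at h1
      have h2 : ζ ^ k = 1 := by
        have := congrArg Prod.fst h1
        simpa using this
      have h3 : ((k : ℕ) : F) = 0 := by
        have := congrArg Prod.snd h1
        simpa using this
      have hmk : m ∣ k := by rw [← hζ]; exact orderOf_dvd_of_pow_eq_one h2
      have hpk : p ∣ k := (hcast0 k).mp h3
      exact Nat.Coprime.mul_dvd_of_dvd_of_dvd hpm hpk hmk
    · rintro ⟨c, rfl⟩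
      rw [Function.iterate_mul, hNid, Function.iterate_id]
  have horder : IsOrderOf η (p * m) :=
    ⟨hNid, fun k hk hkid => Nat.le_of_dvd hk ((hfixiff k).mp hkid)⟩
  -- Ω ⊆ S
  have hΩS : Ω ⊆ S := by
    intro P hP
    rw [hΩ] at hP
    obtain ⟨h1, h2⟩ := hP
    rw [hS]
    show P.2 ^ q - P.2 = P.1 ^ m
    rw [h1, h2, zero_pow hm0.ne', sub_self]
  -- bijection
  have hmaps : Set.MapsTo η S S := by
    intro P hP
    rw [hS] at hP ⊢
    have hP' : P.2 ^ q - P.2 = P.1 ^ m := hP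
    show (η P).2 ^ q - (η P).2 = (η P).1 ^ m
    rw [hη]
    show (P.2 + 1) ^ q - (P.2 + 1) = (ζ * P.1) ^ m
    rw [hfrob, one_pow, mul_pow, hζ1, one_mul, ← hP']
    ring
  have hbij : Set.BijOn η S S := by
    refine ⟨hmaps, fun a _ b _ h => hinj h, ?_⟩
    intro Q hQ
    refine ⟨η^[p * m - 1] Q, hmaps.iterate _ hQ, ?_⟩
    rw [← Function.iterate_succ_apply' η (p * m - 1) Q]
    have h2 : p * m - 1 + 1 = p * m := by omega
    rw [Nat.succ_eq_add_one, h2, hNid]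
    rfl
  -- orbit of a point of Ω
  have hcardΩorb : ∀ P ∈ Ω, (fnOrbit η P).ncard = p := by
    intro P hP
    rw [hΩ] at hP
    obtain ⟨hx, hy⟩ := hP
    rw [fnOrbit_eq_range hN1 hNid]
    refine range_iterate_ncard hp.pos hinj ?_
    intro k
    rw [hiter]
    constructor
    · intro h
      have h3 : P.2 + (k : F) = P.2 := congrArg Prod.snd h
      have : ((k : ℕ) : F) = 0 := by
        have := h3
        rwa [add_eq_left] at this
      exact (hcast0 k).mp this
    · intro h
      have h0 : ((k : ℕ) : F) = 0 := (hcast0 k).mpr h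
      refine Prod.ext ?_ ?_
      · show ζ ^ k * P.1 = P.1; rw [hx, mul_zero]
      · show P.2 + (k : F) = P.2; rw [h0, add_zero]
  -- card of the fixed set {y | y^q = y}
  have hTcard : {y : F | y ^ q = y}.ncard = q := by
    obtain ⟨g, hg⟩ := IsCyclic.exists_generator (α := Fˣ)
    have hordg : orderOf g = q ^ 2 - 1 := by
      rw [orderOf_eq_card_of_forall_mem_zpowers hg, Nat.card_eq_fintype_card,
        Fintype.card_units, hF]
    have hfac : q ^ 2 - 1 = (q + 1) * (q - 1) := by
      rcases Nat.exists_eq_add_of_le hq1 with ⟨t, ht⟩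
      subst ht
      have h1 : (1 + t) ^ 2 = 1 + 2 * t + t * t := by ring
      have h2 : (1 + t + 1) * (1 + t - 1) = (t + 2) * t := by
        congr 1 <;> omega
      rw [h1, h2]
      have : (t + 2) * t = t * t + 2 * t := by ring
      omega
    have hordh : orderOf (g ^ (q + 1)) = q - 1 := by
      rw [orderOf_pow, hordg]
      have hdvd' : Nat.gcd (q ^ 2 - 1) (q + 1) = q + 1 :=
        Nat.gcd_eq_right ⟨q - 1, hfac⟩
      rw [hdvd', hfac, Nat.mul_div_cancel_left _ (by omega)]
    have hprim : IsPrimitiveRoot ((g ^ (q + 1) : Fˣ) : F) (q - 1) :=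
      IsPrimitiveRoot.coe_units_iff.mpr (hordh ▸ IsPrimitiveRoot.orderOf (g ^ (q + 1)))
    have hq10 : 0 < q - 1 := by omega
    have hset : {y : F | y ^ q = y} = insert (0 : F) ↑(Polynomial.nthRootsFinset (q - 1) (1 : F)) := by
      ext y
      simp only [Set.mem_setOf_eq, Set.mem_insert_iff, Finset.mem_coe,
        Polynomial.mem_nthRootsFinset hq10]
      constructor
      · intro hy
        rcases eq_or_ne y 0 with rfl | hy0
        · exact Or.inl rfl
        · right
          have h1 : y ^ (q - 1) * y = 1 * y := by
            rw [← pow_succ, one_mul]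
            have : q - 1 + 1 = q := by omega
            rw [this, hy]
          exact mul_right_cancel₀ hy0 h1
      · rintro (rfl | hy)
        · exact zero_pow (by omega)
        · have h1 : y ^ q = y ^ (q - 1) * y := by
            rw [← pow_succ]
            congr 1
            omega
          rw [h1, hy, one_mul]
    have h0nmem : (0 : F) ∉ Polynomial.nthRootsFinset (q - 1) (1 : F) := by
      intro h0
      rw [Polynomial.mem_nthRootsFinset hq10, zero_pow (by omega : q - 1 ≠ 0)] at h0
      exact zero_ne_one h0
    rw [hset, Set.ncard_insert_of_notMem (by simpa using h0nmem) (Finset.finite_toSet _),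
      Set.ncard_coe_finset, hprim.card_nthRootsFinset]
    omega
  have hΩcard : Ω.ncard = q := by
    have himg : Ω = (fun y => ((0 : F), y)) '' {y : F | y ^ q = y} := by
      rw [hΩ]
      ext P
      simp only [Set.mem_setOf_eq, Set.mem_image]
      constructor
      · rintro ⟨h1, h2⟩
        exact ⟨P.2, h2, by rw [← h1]⟩
      · rintro ⟨y, hy, rfl⟩
        exact ⟨rfl, hy⟩
    rw [himg, Set.ncard_image_of_injective _ (fun a b h => (Prod.ext_iff.mp h).2), hTcard]
  -- orbits of points of Ω stay in Ω
  have horbΩ : ∀ P ∈ Ω, fnOrbit η P ⊆ Ω := by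
    intro P hP Q hQ
    rw [fnOrbit_eq_range hN1 hNid] at hQ
    obtain ⟨t, rfl⟩ := hQ
    rw [hΩ] at hP ⊢
    obtain ⟨hx, hy⟩ := hP
    show η^[t] P ∈ {P : F × F | P.1 = 0 ∧ P.2 ^ q = P.2}
    rw [Set.mem_setOf_eq, hiter]
    refine ⟨?_, ?_⟩
    · show ζ ^ t * P.1 = 0; rw [hx, mul_zero]
    · show (P.2 + (t : F)) ^ q = P.2 + (t : F); rw [hfrob, hy, hnatfix]
  -- counting orbits within Ω
  have h𝒪img : {O : Set (F × F) | ∃ P ∈ Ω, O = fnOrbit η P} = fnOrbit η '' Ω := by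
    ext O
    simp only [Set.mem_setOf_eq, Set.mem_image]
    constructor
    · rintro ⟨P, hP, rfl⟩; exact ⟨P, hP, rfl⟩
    · rintro ⟨P, hP, rfl⟩; exact ⟨P, hP, rfl⟩
  have hΩfin : Ω.Finite := Set.toFinite _
  have h𝒪fin : (fnOrbit η '' Ω).Finite := hΩfin.image _
  have key : q = (h𝒪fin.toFinset).card * p := by
    have h1 : hΩfin.toFinset.card =
        ∑ O ∈ h𝒪fin.toFinset, (hΩfin.toFinset.filter fun P => fnOrbit η P = O).card := by
      apply Finset.card_eq_sum_card_fiberwise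
      intro P hPf
      rw [Finset.mem_coe, Set.Finite.mem_toFinset] at hPf ⊢
      exact ⟨P, hPf, rfl⟩
    have h2 : ∀ O ∈ h𝒪fin.toFinset,
        (hΩfin.toFinset.filter fun P => fnOrbit η P = O).card = p := by
      intro O hO
      rw [Set.Finite.mem_toFinset] at hO
      obtain ⟨P0, hP0, rfl⟩ := hO
      have hfe : (hΩfin.toFinset.filter fun P => fnOrbit η P = fnOrbit η P0) =
          (Set.toFinite (fnOrbit η P0)).toFinset := by
        ext P
        simp only [Finset.mem_filter, Set.Finite.mem_toFinset]
        constructor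
        · rintro ⟨hPΩ, hPeq⟩
          rw [← hPeq]
          exact fnOrbit_self η P
        · intro hPO
          exact ⟨horbΩ P0 hP0 hPO, fnOrbit_eq_of_mem hPO⟩
      rw [hfe, ← Set.ncard_eq_toFinset_card _ (Set.toFinite _)]
      exact hcardΩorb P0 hP0
    calc q = Ω.ncard := hΩcard.symm
      _ = hΩfin.toFinset.card := Set.ncard_eq_toFinset_card _ _
      _ = ∑ O ∈ h𝒪fin.toFinset, (hΩfin.toFinset.filter fun P => fnOrbit η P = O).card := h1
      _ = ∑ _O ∈ h𝒪fin.toFinset, p := Finset.sum_congr rfl h2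
      _ = (h𝒪fin.toFinset).card * p := by rw [Finset.sum_const, smul_eq_mul]
  have hcount : {O : Set (F × F) | ∃ P ∈ Ω, O = fnOrbit η P}.ncard = q / p := by
    rw [h𝒪img, Set.ncard_eq_toFinset_card _ h𝒪fin]
    exact (Nat.div_eq_of_eq_mul_left hp.pos key).symm
  -- big orbits
  have hbig : ∀ P ∈ S, P.1 ≠ 0 → (fnOrbit η P).ncard = p * m := by
    intro P _ hx
    rw [fnOrbit_eq_range hN1 hNid]
    refine range_iterate_ncard hN0 hinj ?_
    intro k
    rw [hiter]
    constructor
    · intro h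
      have h1 : ζ ^ k * P.1 = P.1 := congrArg Prod.fst h
      have h2 : P.2 + (k : F) = P.2 := congrArg Prod.snd h
      have hζk : ζ ^ k = 1 := by
        have := h1
        rw [← one_mul P.1] at this
        exact mul_right_cancel₀ hx (by rw [one_mul] at this ⊢; rw [this])
      have hmk : m ∣ k := by rw [← hζ]; exact orderOf_dvd_of_pow_eq_one hζk
      have hpk : p ∣ k := (hcast0 k).mp (by rwa [add_eq_left] at h2)
      exact Nat.Coprime.mul_dvd_of_dvd_of_dvd hpm hpk hmk
    · intro h
      have hmk : m ∣ k := dvd_trans (Dvd.intro_left p rfl) h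
      have hpk : p ∣ k := dvd_trans (Dvd.intro m rfl) h
      have hζk : ζ ^ k = 1 := by
        obtain ⟨c, rfl⟩ := hmk
        rw [pow_mul, hζ1, one_pow]
      have h0 : ((k : ℕ) : F) = 0 := (hcast0 k).mpr hpk
      refine Prod.ext ?_ ?_
      · show ζ ^ k * P.1 = P.1; rw [hζk, one_mul]
      · show P.2 + (k : F) = P.2; rw [h0, add_zero]
  exact ⟨hΩS, hbij, horder, hcardΩorb, hcount, hbig⟩
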